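/- Let α ≥ 0, γ ≥ 1 be real and β ∈ ℂ with 2(γ+α) > |β|. Then Σ_{n=1}^∞ |A_n| ≤ 2|β|/(2(γ+α)−|β|), equivalently ((2(γ+α)−|β|)/(2|β|)) · Σ_{n=1}^∞ |A_n| ≤ 1 (when β ≠ 0), where A_n = β^n Γ(γ+α)/Γ((γ+α)(n+1)). -/

import Mathlib

open Complex

noncomputable def rabA (α γ : ℝ) (β : ℂ) (n : ℕ) : ℂ :=
  β ^ n * (Real.Gamma (γ + α) : ℂ) / (Real.Gamma ((γ + α) * (n + 1)) : ℂ)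

noncomputable def rab (α γ : ℝ) (β : ℂ) (z : ℂ) : ℂ :=
  z + ∑' k : ℕ, rabA α γ β (k + 1) * z ^ (k + 2)

noncomputable def rabPartial (α γ : ℝ) (β : ℂ) (m : ℕ) (z : ℂ) : ℂ :=
  z + ∑ k ∈ Finset.range m, rabA α γ β (k + 1) * z ^ (k + 2)

noncomputable def rabD (α γ : ℝ) (β : ℂ) (z : ℂ) : ℂ :=
  1 + ∑' k : ℕ, ((k : ℂ) + 2) * rabA α γ β (k + 1) * z ^ (k + 1)

noncomputable def rabDPartial (α γ : ℝ) (β : ℂ) (m : ℕ) (z : ℂ) : ℂ :=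
  1 + ∑ k ∈ Finset.range m, ((k : ℂ) + 2) * rabA α γ β (k + 1) * z ^ (k + 1)

noncomputable def rabAlex (α γ : ℝ) (β : ℂ) (z : ℂ) : ℂ :=
  z + ∑' k : ℕ, rabA α γ β (k + 1) / ((k : ℂ) + 2) * z ^ (k + 2)

noncomputable def rabAlexPartial (α γ : ℝ) (β : ℂ) (m : ℕ) (z : ℂ) : ℂ :=
  z + ∑ k ∈ Finset.range m, rabA α γ β (k + 1) / ((k : ℂ) + 2) * z ^ (k + 2)

lemma gamma_fac {c : ℝ} (hc : 1 ≤ c) (n : ℕ) :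
    Real.Gamma c * c ^ n * n.factorial ≤ Real.Gamma (c * (n + 1)) := by
  induction n with
  | zero => simp
  | succ n ih =>
    have hcpos : (0:ℝ) < c := lt_of_lt_of_le one_pos hc
    have hn1 : (1:ℝ) ≤ (n:ℝ) + 1 := by have : (0:ℝ) ≤ (n:ℝ) := n.cast_nonneg; linarith
    have h1 : c * (n + 1) + 1 ≤ c * (n + 2) := by nlinarith
    have step : Real.Gamma (c * (n + 1) + 1) ≤ Real.Gamma (c * (n + 2)) := by
      apply Real.Gamma_strictMonoOn_Ici.monotoneOn
      · simp only [Set.mem_Ici]; nlinarith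
      · simp only [Set.mem_Ici]; nlinarith
      · exact h1
    have hrec : Real.Gamma (c * (↑n + 1) + 1) = c * (↑n + 1) * Real.Gamma (c * (↑n + 1)) :=
      Real.Gamma_add_one (by positivity)
    calc Real.Gamma c * c ^ (n + 1) * (n + 1).factorial
        = c * (↑n + 1) * (Real.Gamma c * c ^ n * n.factorial) := by
          push_cast [Nat.factorial_succ]; ring
      _ ≤ c * (↑n + 1) * Real.Gamma (c * (↑n + 1)) := by
          apply mul_le_mul_of_nonneg_left ih; positivity
      _ = Real.Gamma (c * (↑n + 1) + 1) := hrec.symm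
      _ ≤ Real.Gamma (c * (↑n + 2)) := step
      _ = Real.Gamma (c * ((n + 1 : ℕ) + 1)) := by push_cast; ring_nf

theorem rabA_sum_bound (α γ : ℝ) (β : ℂ) (hα : 0 ≤ α) (hγ : 1 ≤ γ)
    (hβ : ‖β‖ < 2 * (γ + α)) :
    (∑' k : ℕ, ‖rabA α γ β (k + 1)‖) ≤
      2 * ‖β‖ / (2 * (γ + α) - ‖β‖) := by
  set c := γ + α with hc
  have hc1 : (1:ℝ) ≤ c := by linarith
  have hcpos : (0:ℝ) < c := by linarith
  set r : ℝ := ‖β‖ / (2 * c) with hr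
  have hr0 : 0 ≤ r := by positivity
  have hr1 : r < 1 := by rw [hr, div_lt_one (by linarith)]; exact hβ
  have key : ∀ k : ℕ, ‖rabA α γ β (k + 1)‖ ≤ 2 * r ^ (k + 1) := by
    intro k
    have hg2 : 0 < Real.Gamma (c * ((k + 1 : ℕ) + 1)) :=
      Real.Gamma_pos_of_pos (by positivity)
    have hg1 : 0 < Real.Gamma c := Real.Gamma_pos_of_pos hcpos
    have habs : ‖rabA α γ β (k + 1)‖ =
        ‖β‖ ^ (k + 1) * Real.Gamma c / Real.Gamma (c * ((k + 1 : ℕ) + 1)) := by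
      simp [rabA, map_div₀, map_mul, map_pow, Complex.norm_real,
        abs_of_pos hg1, hc]
      have hg2' : 0 < Real.Gamma ((γ + α) * (↑k + 1 + 1)) := by
        convert hg2 using 2; push_cast; ring
      rw [abs_of_pos hg2', abs_of_pos (show 0 < Real.Gamma (γ + α) from hg1)]
    rw [habs]
    have hfac : ((2:ℝ)) ^ k ≤ ((k + 1).factorial : ℝ) := by
      have h := @Nat.factorial_mul_pow_le_factorial 1 k
      have := Nat.cast_le (α := ℝ) |>.mpr h
      simpa [add_comm] using this
    have hgam := gamma_fac hc1 (k + 1)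
    have hb : Real.Gamma c * c ^ (k + 1) * 2 ^ k ≤ Real.Gamma (c * ((k + 1 : ℕ) + 1)) := by
      refine le_trans ?_ hgam
      apply mul_le_mul_of_nonneg_left hfac (by positivity)
    rw [div_le_iff₀ hg2]
    calc ‖β‖ ^ (k + 1) * Real.Gamma c
        ≤ 2 * r ^ (k + 1) * (Real.Gamma c * c ^ (k + 1) * 2 ^ k) := by
          have : ‖β‖ ^ (k + 1) = r ^ (k + 1) * (2 * c) ^ (k + 1) := by
            rw [← mul_pow, hr, div_mul_cancel₀]; positivity
          rw [this, mul_pow]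
          apply le_of_eq
          ring
      _ ≤ 2 * r ^ (k + 1) * Real.Gamma (c * ((k + 1 : ℕ) + 1)) := by
          apply mul_le_mul_of_nonneg_left hb (by positivity)
  have hsumg : Summable (fun k : ℕ => 2 * r ^ (k + 1)) := by
    apply Summable.mul_left
    exact ((summable_geometric_of_lt_one hr0 hr1).comp_injective Nat.succ_injective)
  have hsum : Summable (fun k : ℕ => ‖rabA α γ β (k + 1)‖) :=
    Summable.of_nonneg_of_le (fun k => norm_nonneg _) key hsumg
  have htsum : (∑' k : ℕ, 2 * r ^ (k + 1)) = 2 * ‖β‖ / (2 * c - ‖β‖) := by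
    have : (∑' k : ℕ, 2 * r ^ (k + 1)) = 2 * (r * (1 - r)⁻¹) := by
      rw [tsum_mul_left]
      congr 1
      have : ∀ k : ℕ, r ^ (k + 1) = r * r ^ k := fun k => by ring
      simp_rw [this]
      rw [tsum_mul_left, tsum_geometric_of_lt_one hr0 hr1]
    rw [this, hr]
    have h2c : (0:ℝ) < 2 * c := by linarith
    have hden : 0 < 2 * c - ‖β‖ := by linarith
    have hne : (2*c) ≠ 0 := by linarith
    have hdne : 2 * c - ‖β‖ ≠ 0 := by linarith
    rw [eq_div_iff hdne]
    field_simp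
  calc (∑' k : ℕ, ‖rabA α γ β (k + 1)‖)
      ≤ ∑' k : ℕ, 2 * r ^ (k + 1) := Summable.tsum_le_tsum key hsum hsumg
    _ = 2 * ‖β‖ / (2 * c - ‖β‖) := htsum
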